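/- If a fair finite multiset of n ≥ 6 triples is irreducible (i.e., deleting any one triple from it yields a multiset that is not fair), then there exist three distinct elements that each appear in exactly n−2 of the triples. -/
import Mathlib

/-- `T` is *`c`-fair*: every element appearing in some tuple of `T` is absent from at
least `c` of the tuples (counted with multiplicity). -/
def CFair (c : ℕ) (T : Multiset (Finset ℕ+)) : Prop :=
  ∀ i : ℕ+, (∃ t ∈ T, i ∈ t) →
    c ≤ Multiset.card (T.filter (fun t => i ∉ t))

lemma tight_witness (T : Multiset (Finset ℕ+)) (hfair : CFair 2 T)
    (t : Finset ℕ+) (ht : t ∈ T) (h : ¬ CFair 2 (T.erase t)) :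
    ∃ i : ℕ+, i ∉ t ∧ Multiset.card (T.filter (fun s => i ∉ s)) = 2 := by
  unfold CFair at h
  push_neg at h
  obtain ⟨i, ⟨s, hs, his⟩, hlt⟩ := h
  have hsT : s ∈ T := Multiset.mem_of_mem_erase hs
  have h2 : 2 ≤ Multiset.card (T.filter (fun s => i ∉ s)) :=
    hfair i ⟨s, hsT, his⟩
  have hT : T = t ::ₘ T.erase t := (Multiset.cons_erase ht).symm
  have hcard : T.filter (fun s => i ∉ s)
      = (if i ∉ t then {t} else 0) + (T.erase t).filter (fun s => i ∉ s) := by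
    conv_lhs => rw [hT]
    rw [Multiset.filter_cons]
  by_cases hit : i ∈ t
  · exfalso
    rw [hcard, if_neg (by simpa using hit)] at h2
    simp at h2
    omega
  · refine ⟨i, hit, ?_⟩
    rw [hcard, if_pos hit, Multiset.card_add, Multiset.card_singleton] at h2 ⊢
    omega

lemma mem_card_of_tight (T : Multiset (Finset ℕ+)) (i : ℕ+)
    (h2 : Multiset.card (T.filter (fun s => i ∉ s)) = 2) :
    Multiset.card (T.filter (fun s => i ∈ s)) = Multiset.card T - 2 := by
  have h := Multiset.filter_add_not (fun s => i ∈ s) T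
  have hc := congrArg Multiset.card h
  rw [Multiset.card_add] at hc
  have : Multiset.card (T.filter (fun s => ¬ i ∈ s)) = 2 := h2
  omega

theorem irreducible_has_three_tight_elements
    (T : Multiset (Finset ℕ+)) (hT : ∀ t ∈ T, t.card = 3)
    (hn : 6 ≤ Multiset.card T)
    (hfair : CFair 2 T)
    (hirr : ∀ t ∈ T, ¬ CFair 2 (T.erase t)) :
    ∃ a b c : ℕ+, a ≠ b ∧ a ≠ c ∧ b ≠ c ∧
      Multiset.card (T.filter (fun s => a ∈ s)) = Multiset.card T - 2 ∧
      Multiset.card (T.filter (fun s => b ∈ s)) = Multiset.card T - 2 ∧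
      Multiset.card (T.filter (fun s => c ∈ s)) = Multiset.card T - 2 := by
  have h0 : 0 < Multiset.card T := by omega
  obtain ⟨t0, ht0⟩ := Multiset.card_pos_iff_exists_mem.mp h0
  obtain ⟨a, _, ha2⟩ := tight_witness T hfair t0 ht0 (hirr t0 ht0)
  have haMem := mem_card_of_tight T a ha2
  -- find t1 containing a
  have h1 : 0 < Multiset.card (T.filter (fun s => a ∈ s)) := by omega
  obtain ⟨t1, ht1'⟩ := Multiset.card_pos_iff_exists_mem.mp h1
  rw [Multiset.mem_filter] at ht1'
  obtain ⟨ht1, hat1⟩ := ht1'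
  obtain ⟨b, hbt1, hb2⟩ := tight_witness T hfair t1 ht1 (hirr t1 ht1)
  have hbMem := mem_card_of_tight T b hb2
  have hab : a ≠ b := fun h => hbt1 (h ▸ hat1)
  -- find t2 containing a and b
  have hsplit := congrArg Multiset.card
    (Multiset.filter_add_not (fun s => a ∈ s ∧ b ∈ s) T)
  rw [Multiset.card_add] at hsplit
  have hle : T.filter (fun s => ¬ (a ∈ s ∧ b ∈ s))
      ≤ T.filter (fun s => a ∉ s) + T.filter (fun s => b ∉ s) := by
    rw [Multiset.le_iff_count]
    intro x
    rw [Multiset.count_add, Multiset.count_filter, Multiset.count_filter,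
      Multiset.count_filter]
    split_ifs <;> first | omega | (exfalso; tauto)
  have hle' := Multiset.card_le_card hle
  rw [Multiset.card_add, ha2, hb2] at hle'
  have h2 : 0 < Multiset.card (T.filter (fun s => a ∈ s ∧ b ∈ s)) := by omega
  obtain ⟨t2, ht2'⟩ := Multiset.card_pos_iff_exists_mem.mp h2
  rw [Multiset.mem_filter] at ht2'
  obtain ⟨ht2, hat2, hbt2⟩ := ht2'
  obtain ⟨c, hct2, hc2⟩ := tight_witness T hfair t2 ht2 (hirr t2 ht2)
  have hcMem := mem_card_of_tight T c hc2
  exact ⟨a, b, c, hab, fun h => hct2 (h ▸ hat2), fun h => hct2 (h ▸ hbt2),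
    haMem, hbMem, hcMem⟩
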